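/- arXiv:2003.00371 — 2 statements merged into one kernel-verified Lean document; each statement's English description precedes it below -/
import Mathlib

section
/- Let γ1 > 0 and γ2 > 0, let α be as defined below, and suppose 0 < t ≤ α²/(2γ2·α² + 1) and that every GEN-ISTA iterate satisfies αI ⪯ Ω^{(k)}. Then every iterate satisfies Ω^{(k)} ⪯ b'I, where b' = ‖Ω*‖₂ + ‖Ω^{(0)} − Ω*‖_F and Ω* is the minimizer of the elastic-net objective. -/
open Matrix BigOperators Kronecker

/-- Frobenius norm of a real matrix. -/
noncomputable def frobNorm {n : Type*} [Fintype n] (A : Matrix n n ℝ) : ℝ :=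
  Real.sqrt (∑ i, ∑ j, (A i j)^2)

/-- Entrywise L1 norm of a real matrix. -/
noncomputable def l1Norm {n : Type*} [Fintype n] (A : Matrix n n ℝ) : ℝ :=
  ∑ i, ∑ j, |A i j|

/-- Spectral (ℓ2 operator) norm of a real matrix. -/
noncomputable def specNorm {n : Type*} [Fintype n] [DecidableEq n] (A : Matrix n n ℝ) : ℝ :=
  ‖Matrix.toEuclideanCLM (𝕜 := ℝ) A‖

/-- Largest eigenvalue ρ₁(A) of a symmetric real matrix (junk value 0 otherwise). -/
noncomputable def maxEig {n : Type*} [Fintype n] [DecidableEq n] (A : Matrix n n ℝ) : ℝ :=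
  if h : A.IsHermitian then ⨆ i, h.eigenvalues i else 0

/-- Smallest eigenvalue ρ_p(A) of a symmetric real matrix (junk value 0 otherwise). -/
noncomputable def minEig {n : Type*} [Fintype n] [DecidableEq n] (A : Matrix n n ℝ) : ℝ :=
  if h : A.IsHermitian then ⨅ i, h.eigenvalues i else 0

/-- Loewner order: A ⪯ B iff B - A is positive semidefinite. -/
def loewnerLE {n : Type*} [Fintype n] (A B : Matrix n n ℝ) : Prop := (B - A).PosSemidef

/-- Entrywise soft-thresholding operator. -/
noncomputable def Sft {n : Type*} (A : Matrix n n ℝ) (τ : ℝ) : Matrix n n ℝ :=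
  Matrix.of fun i j => Real.sign (A i j) * max (|A i j| - τ) 0

/-- The elastic-net penalized Gaussian likelihood objective
  F(Ω) = tr(S̃Ω) − log det Ω + γ1‖Ω‖₁ + γ2‖Ω‖_F². -/
noncomputable def genObj {n : Type*} [Fintype n] [DecidableEq n]
    (S : Matrix n n ℝ) (γ1 γ2 : ℝ) (Ω : Matrix n n ℝ) : ℝ :=
  (S * Ω).trace - Real.log Ω.det + γ1 * l1Norm Ω + γ2 * (frobNorm Ω)^2

section ScalarSft

lemma sftR_eq (x τ : ℝ) (hτ : 0 ≤ τ) :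
    Real.sign x * max (|x| - τ) 0 = max (x - τ) 0 + min (x + τ) 0 := by
  rcases lt_trichotomy x 0 with hx|hx|hx
  · rw [Real.sign_of_neg hx, abs_of_neg hx]
    rcases max_cases (-x - τ) 0 with ⟨e1,f1⟩|⟨e1,f1⟩ <;>
    rcases max_cases (x - τ) 0 with ⟨e2,f2⟩|⟨e2,f2⟩ <;>
    rcases min_cases (x + τ) 0 with ⟨e3,f3⟩|⟨e3,f3⟩ <;>
    rw [e1,e2,e3] <;> linarith
  · subst hx; simp only [Real.sign_zero, zero_mul, zero_sub, zero_add]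
    rw [max_eq_right (by linarith : -τ ≤ (0:ℝ)), min_eq_right hτ]
    ring
  · rw [Real.sign_of_pos hx, abs_of_pos hx, one_mul,
      min_eq_right (by linarith : (0:ℝ) ≤ x + τ), add_zero]

lemma sftR_lip (τ : ℝ) (hτ : 0 ≤ τ) (x y : ℝ) :
    |Real.sign x * max (|x| - τ) 0 - Real.sign y * max (|y| - τ) 0| ≤ |x - y| := by
  rw [sftR_eq x τ hτ, sftR_eq y τ hτ]
  rcases max_cases (x - τ) 0 with ⟨e1,f1⟩|⟨e1,f1⟩ <;>
  rcases min_cases (x + τ) 0 with ⟨e2,f2⟩|⟨e2,f2⟩ <;>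
  rcases max_cases (y - τ) 0 with ⟨e3,f3⟩|⟨e3,f3⟩ <;>
  rcases min_cases (y + τ) 0 with ⟨e4,f4⟩|⟨e4,f4⟩ <;>
  rw [e1,e2,e3,e4,abs_le] <;>
  rcases abs_cases (x - y) with ⟨h,h'⟩|⟨h,h'⟩ <;> constructor <;> linarith

end ScalarSft

section Frob

variable {n : Type*} [Fintype n]

lemma frobNorm_nonneg (A : Matrix n n ℝ) : 0 ≤ frobNorm A := Real.sqrt_nonneg _

lemma frobNorm_sq (A : Matrix n n ℝ) : frobNorm A ^ 2 = ∑ i, ∑ j, (A i j)^2 :=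
  Real.sq_sqrt (by positivity)

lemma frobNorm_mono (A B : Matrix n n ℝ) (h : ∀ i j, |A i j| ≤ |B i j|) :
    frobNorm A ≤ frobNorm B := by
  apply Real.sqrt_le_sqrt
  apply Finset.sum_le_sum
  intro i _
  apply Finset.sum_le_sum
  intro j _
  rw [← sq_abs (A i j), ← sq_abs (B i j)]
  exact pow_le_pow_left₀ (abs_nonneg _) (h i j) 2

lemma frobNorm_Sft_sub_Sft (A B : Matrix n n ℝ) (τ : ℝ) (hτ : 0 ≤ τ) :
    frobNorm (Sft A τ - Sft B τ) ≤ frobNorm (A - B) := by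
  apply frobNorm_mono
  intro i j
  have := sftR_lip τ hτ (A i j) (B i j)
  simpa [Sft, Matrix.sub_apply] using this

lemma frobNorm_eq_sqrt_trace (A : Matrix n n ℝ) :
    frobNorm A = Real.sqrt (Aᴴ * A).trace := by
  unfold frobNorm
  congr 1
  rw [Matrix.trace]
  rw [Finset.sum_comm]
  apply Finset.sum_congr rfl
  intro i _
  simp [Matrix.diag, Matrix.mul_apply, Matrix.conjTranspose_apply, sq]

lemma frobNorm_unitary_conj {n : Type*} [Fintype n] [DecidableEq n]
    (U V A : Matrix n n ℝ) (hU : U * star U = 1) (hV : V * star V = 1) :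
    frobNorm (star U * A * V) = frobNorm A := by
  rw [frobNorm_eq_sqrt_trace, frobNorm_eq_sqrt_trace]
  congr 1
  have h1 : (star U * A * V)ᴴ = star V * Aᴴ * U := by
    simp [Matrix.star_eq_conjTranspose, Matrix.conjTranspose_mul, Matrix.mul_assoc]
  rw [h1]
  have : star V * Aᴴ * U * (star U * A * V) = star V * (Aᴴ * A) * V := by
    calc star V * Aᴴ * U * (star U * A * V)
        = star V * Aᴴ * (U * star U) * A * V := by
          simp only [Matrix.mul_assoc]
      _ = star V * (Aᴴ * A) * V := by rw [hU]; simp only [Matrix.mul_one, Matrix.mul_assoc]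
  rw [this, Matrix.trace_mul_comm, ← Matrix.mul_assoc, hV, Matrix.one_mul]

end Frob
section Spectral

variable {n : Type*} [Fintype n] [DecidableEq n]

omit [Fintype n] [DecidableEq n] in
lemma star_trivial_vec (x : n → ℝ) : star x = x := by
  funext i; simp

lemma spectral_real {A : Matrix n n ℝ} (hA : A.IsHermitian) :
    A = (hA.eigenvectorUnitary : Matrix n n ℝ) * Matrix.diagonal hA.eigenvalues *
      star (hA.eigenvectorUnitary : Matrix n n ℝ) := by
  have h := hA.spectral_theorem
  rw [Unitary.conjStarAlgAut_apply] at h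
  exact h

omit [DecidableEq n] in
lemma vecMul_eq_star_mulVec (U : Matrix n n ℝ) (x : n → ℝ) :
    x ᵥ* U = star U *ᵥ x := by
  funext j
  simp [Matrix.vecMul, Matrix.mulVec, dotProduct, Matrix.star_apply, mul_comm]

lemma dot_diagonal_quad (f : n → ℝ) (y : n → ℝ) :
    y ⬝ᵥ (Matrix.diagonal f *ᵥ y) = ∑ i, f i * (y i)^2 := by
  simp [dotProduct, Matrix.mulVec_diagonal]
  apply Finset.sum_congr rfl
  intro i _
  ring

lemma quadform_eig {A : Matrix n n ℝ} (hA : A.IsHermitian) (x : n → ℝ) :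
    x ⬝ᵥ (A *ᵥ x) = ∑ i, hA.eigenvalues i *
      (((star (hA.eigenvectorUnitary : Matrix n n ℝ)) *ᵥ x) i)^2 := by
  set U : Matrix n n ℝ := (hA.eigenvectorUnitary : Matrix n n ℝ) with hU
  have h1 : A *ᵥ x = U *ᵥ (Matrix.diagonal hA.eigenvalues *ᵥ (star U *ᵥ x)) := by
    conv_lhs => rw [spectral_real hA]
    rw [← hU, Matrix.mul_assoc, ← Matrix.mulVec_mulVec, ← Matrix.mulVec_mulVec]
  rw [h1, Matrix.dotProduct_mulVec, vecMul_eq_star_mulVec, dot_diagonal_quad]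

lemma starU_norm {A : Matrix n n ℝ} (hA : A.IsHermitian) (x : n → ℝ) :
    ((star (hA.eigenvectorUnitary : Matrix n n ℝ)) *ᵥ x) ⬝ᵥ
      ((star (hA.eigenvectorUnitary : Matrix n n ℝ)) *ᵥ x) = x ⬝ᵥ x := by
  set U : Matrix n n ℝ := (hA.eigenvectorUnitary : Matrix n n ℝ) with hUdef
  have hmem := hA.eigenvectorUnitary.2
  have hU1 : U * star U = 1 := (Matrix.mem_unitaryGroup_iff).mp hmem
  have h1 : U *ᵥ (star U *ᵥ x) = x := by
    rw [Matrix.mulVec_mulVec, hU1, Matrix.one_mulVec]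
  calc (star U *ᵥ x) ⬝ᵥ (star U *ᵥ x)
      = (x ᵥ* U) ⬝ᵥ (star U *ᵥ x) := by rw [vecMul_eq_star_mulVec]
    _ = x ⬝ᵥ (U *ᵥ (star U *ᵥ x)) := by rw [← Matrix.dotProduct_mulVec]
    _ = x ⬝ᵥ x := by rw [h1]

/-- quadratic form lower bound from a Loewner bound -/
lemma quad_ge_of_loewner {A : Matrix n n ℝ} {c : ℝ}
    (h : (A - c • (1 : Matrix n n ℝ)).PosSemidef) (x : n → ℝ) :
    c * (x ⬝ᵥ x) ≤ x ⬝ᵥ (A *ᵥ x) := by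
  have := h.dotProduct_mulVec_nonneg x
  rw [star_trivial_vec] at this
  have hexp : x ⬝ᵥ ((A - c • (1 : Matrix n n ℝ)) *ᵥ x) = x ⬝ᵥ (A *ᵥ x) - c * (x ⬝ᵥ x) := by
    rw [Matrix.sub_mulVec, dotProduct_sub]
    congr 1
    rw [Matrix.smul_mulVec, Matrix.one_mulVec, dotProduct_smul, smul_eq_mul]
  linarith [hexp ▸ this]

lemma eig_ge_of_loewner {A : Matrix n n ℝ} (hA : A.IsHermitian) {c : ℝ}
    (h : (A - c • (1 : Matrix n n ℝ)).PosSemidef) (i : n) :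
    c ≤ hA.eigenvalues i := by
  set U : Matrix n n ℝ := (hA.eigenvectorUnitary : Matrix n n ℝ) with hUdef
  have hmem := hA.eigenvectorUnitary.2
  have hU2 : star U * U = 1 := (Matrix.mem_unitaryGroup_iff').mp hmem
  set x : n → ℝ := fun k => U k i with hx
  have hx1 : x = U *ᵥ Pi.single i 1 := by
    funext k; simp [hx, Matrix.mulVec_single]
  have hsx : star U *ᵥ x = Pi.single i 1 := by
    rw [hx1, Matrix.mulVec_mulVec, hU2, Matrix.one_mulVec]
  have hq := quadform_eig hA x
  rw [hsx] at hq
  have hq' : x ⬝ᵥ (A *ᵥ x) = hA.eigenvalues i := by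
    rw [hq, Finset.sum_eq_single i]
    · simp
    · intro b _ hb; simp [Pi.single_apply, hb]
    · intro hi; exact absurd (Finset.mem_univ i) hi
  have hn := starU_norm hA x
  rw [hsx] at hn
  have hn' : x ⬝ᵥ x = 1 := by
    rw [← hn]
    simp [dotProduct, Pi.single_apply]
  have := quad_ge_of_loewner h x
  rw [hq', hn'] at this
  linarith

lemma loewner_of_eig_ge {A : Matrix n n ℝ} (hA : A.IsHermitian) {c : ℝ}
    (h : ∀ i, c ≤ hA.eigenvalues i) :
    (A - c • (1 : Matrix n n ℝ)).PosSemidef := by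
  apply Matrix.PosSemidef.of_dotProduct_mulVec_nonneg
  · have : (c • (1 : Matrix n n ℝ)).IsHermitian := by
      unfold Matrix.IsHermitian
      simp [Matrix.conjTranspose_smul]
    exact hA.sub this
  · intro x
    rw [star_trivial_vec]
    have hexp : x ⬝ᵥ ((A - c • (1 : Matrix n n ℝ)) *ᵥ x) = x ⬝ᵥ (A *ᵥ x) - c * (x ⬝ᵥ x) := by
      rw [Matrix.sub_mulVec, dotProduct_sub]
      congr 1
      rw [Matrix.smul_mulVec, Matrix.one_mulVec, dotProduct_smul, smul_eq_mul]
    rw [hexp, quadform_eig hA x]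
    have hn := starU_norm hA x
    set y := (star (hA.eigenvectorUnitary : Matrix n n ℝ)) *ᵥ x with hy
    have hxx : x ⬝ᵥ x = ∑ i, (y i)^2 := by
      rw [← hn]; simp [dotProduct, sq]
    rw [hxx, Finset.mul_sum, ← Finset.sum_sub_distrib]
    apply Finset.sum_nonneg
    intro i _
    have : c * (y i)^2 ≤ hA.eigenvalues i * (y i)^2 :=
      mul_le_mul_of_nonneg_right (h i) (sq_nonneg _)
    linarith

lemma quad_le_maxEig [Nonempty n] {A : Matrix n n ℝ} (hA : A.IsHermitian) (x : n → ℝ) :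
    x ⬝ᵥ (A *ᵥ x) ≤ maxEig A * (x ⬝ᵥ x) := by
  rw [quadform_eig hA x]
  have hn := starU_norm hA x
  set y := (star (hA.eigenvectorUnitary : Matrix n n ℝ)) *ᵥ x with hy
  have hxx : x ⬝ᵥ x = ∑ i, (y i)^2 := by
    rw [← hn]; simp [dotProduct, sq]
  rw [hxx, Finset.mul_sum]
  apply Finset.sum_le_sum
  intro i _
  apply mul_le_mul_of_nonneg_right _ (sq_nonneg _)
  rw [maxEig, dif_pos hA]
  exact le_ciSup (Set.Finite.bddAbove (Set.finite_range _)) i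

lemma inv_spectral {A : Matrix n n ℝ} (hA : A.PosDef) :
    A⁻¹ = (hA.1.eigenvectorUnitary : Matrix n n ℝ) *
      Matrix.diagonal (fun i => (hA.1.eigenvalues i)⁻¹) *
      star (hA.1.eigenvectorUnitary : Matrix n n ℝ) := by
  apply Matrix.inv_eq_right_inv
  set U : Matrix n n ℝ := (hA.1.eigenvectorUnitary : Matrix n n ℝ) with hUdef
  have hmem := hA.1.eigenvectorUnitary.2
  have hU1 : U * star U = 1 := (Matrix.mem_unitaryGroup_iff).mp hmem
  have hU2 : star U * U = 1 := (Matrix.mem_unitaryGroup_iff').mp hmem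
  have hsp := spectral_real hA.1
  rw [← hUdef] at hsp
  have hdd : Matrix.diagonal hA.1.eigenvalues * Matrix.diagonal (fun i => (hA.1.eigenvalues i)⁻¹)
      = 1 := by
    rw [Matrix.diagonal_mul_diagonal]
    have : (fun i => hA.1.eigenvalues i * (hA.1.eigenvalues i)⁻¹) = fun _ => (1:ℝ) := by
      funext i
      exact mul_inv_cancel₀ (ne_of_gt (hA.eigenvalues_pos i))
    rw [this, Matrix.diagonal_one]
  calc A * (U * Matrix.diagonal (fun i => (hA.1.eigenvalues i)⁻¹) * star U)
      = U * Matrix.diagonal hA.1.eigenvalues * star U *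
        (U * Matrix.diagonal (fun i => (hA.1.eigenvalues i)⁻¹) * star U) := by
        rw [← hsp]
    _ = U * Matrix.diagonal hA.1.eigenvalues * (star U * U) *
          Matrix.diagonal (fun i => (hA.1.eigenvalues i)⁻¹) * star U := by
        simp only [Matrix.mul_assoc]
    _ = 1 := by
        rw [hU2, Matrix.mul_one, Matrix.mul_assoc U, hdd, Matrix.mul_one, hU1]

end Spectral
section Contraction

variable {n : Type*} [Fintype n] [DecidableEq n]

lemma contraction_bound {X Y : Matrix n n ℝ} (hX : X.PosDef) (hY : Y.PosDef)
    {α t γ2 : ℝ} (hα : 0 < α) (hγ2 : 0 < γ2) (ht0 : 0 < t)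
    (hXa : (X - α • (1 : Matrix n n ℝ)).PosSemidef)
    (hYa : (Y - α • (1 : Matrix n n ℝ)).PosSemidef)
    (ht : t * (2*γ2*α^2 + 1) ≤ α^2)
    (D : Matrix n n ℝ) :
    frobNorm ((1 - 2*t*γ2) • D - t • (X⁻¹ * D * Y⁻¹)) ≤ frobNorm D := by
  set U : Matrix n n ℝ := (hX.1.eigenvectorUnitary : Matrix n n ℝ) with hUdef
  set V : Matrix n n ℝ := (hY.1.eigenvectorUnitary : Matrix n n ℝ) with hVdef
  have hU1 : U * star U = 1 := (Matrix.mem_unitaryGroup_iff).mp hX.1.eigenvectorUnitary.2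
  have hU2 : star U * U = 1 := (Matrix.mem_unitaryGroup_iff').mp hX.1.eigenvectorUnitary.2
  have hV1 : V * star V = 1 := (Matrix.mem_unitaryGroup_iff).mp hY.1.eigenvectorUnitary.2
  have hV2 : star V * V = 1 := (Matrix.mem_unitaryGroup_iff').mp hY.1.eigenvectorUnitary.2
  set lam := hX.1.eigenvalues with hlam
  set nu := hY.1.eigenvalues with hnu
  have hXinv := inv_spectral hX
  have hYinv := inv_spectral hY
  rw [← hUdef, ← hlam] at hXinv
  rw [← hVdef, ← hnu] at hYinv
  set E : Matrix n n ℝ := star U * D * V with hE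
  set M : Matrix n n ℝ := (1 - 2*t*γ2) • D - t • (X⁻¹ * D * Y⁻¹) with hM
  have key : star U * (X⁻¹ * D * Y⁻¹) * V =
      Matrix.diagonal (fun i => (lam i)⁻¹) * E * Matrix.diagonal (fun i => (nu i)⁻¹) := by
    rw [hXinv, hYinv, hE]
    simp only [Matrix.mul_assoc]
    rw [hV2, Matrix.mul_one, ← Matrix.mul_assoc (star U) U, hU2, Matrix.one_mul]
  have hMconj : star U * M * V = (1 - 2*t*γ2) • E -
      t • (Matrix.diagonal (fun i => (lam i)⁻¹) * E * Matrix.diagonal (fun i => (nu i)⁻¹)) := by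
    rw [hM, Matrix.mul_sub, Matrix.sub_mul, Matrix.mul_smul, Matrix.smul_mul,
      Matrix.mul_smul, Matrix.smul_mul, key, hE]
  have hfM : frobNorm M = frobNorm (star U * M * V) :=
    (frobNorm_unitary_conj U V M hU1 hV1).symm
  have hfE : frobNorm E = frobNorm D := frobNorm_unitary_conj U V D hU1 hV1
  rw [hfM, hMconj, ← hfE]
  apply frobNorm_mono
  intro i j
  have hentry : ((1 - 2*t*γ2) • E -
      t • (Matrix.diagonal (fun i => (lam i)⁻¹) * E * Matrix.diagonal (fun i => (nu i)⁻¹))) i j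
      = (1 - 2*t*γ2 - t * ((lam i)⁻¹ * (nu j)⁻¹)) * E i j := by
    simp only [Matrix.sub_apply, Matrix.smul_apply, smul_eq_mul]
    rw [Matrix.mul_diagonal, Matrix.diagonal_mul]
    ring
  rw [hentry, abs_mul]
  have hli : α ≤ lam i := eig_ge_of_loewner hX.1 hXa i
  have hnj : α ≤ nu j := eig_ge_of_loewner hY.1 hYa j
  have hlip : 0 < lam i := lt_of_lt_of_le hα hli
  have hnjp : 0 < nu j := lt_of_lt_of_le hα hnj
  have hinv1 : (lam i)⁻¹ ≤ α⁻¹ := by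
    apply inv_anti₀ hα hli
  have hinv2 : (nu j)⁻¹ ≤ α⁻¹ := by
    apply inv_anti₀ hα hnj
  have hprod : (lam i)⁻¹ * (nu j)⁻¹ ≤ α⁻¹ * α⁻¹ := by
    apply mul_le_mul hinv1 hinv2 (le_of_lt (inv_pos.mpr hnjp)) (le_of_lt (inv_pos.mpr hα))
  have hprodpos : 0 < (lam i)⁻¹ * (nu j)⁻¹ :=
    mul_pos (inv_pos.mpr hlip) (inv_pos.mpr hnjp)
  have hαβ : α * α⁻¹ = 1 := mul_inv_cancel₀ (ne_of_gt hα)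
  have hsq : α^2 * (α⁻¹ * α⁻¹) = 1 := by
    rw [sq]; field_simp
  have htb : t * (α⁻¹ * α⁻¹) ≤ 1 - 2*t*γ2 := by
    have hββ : (0:ℝ) ≤ α⁻¹ * α⁻¹ := mul_nonneg (inv_pos.mpr hα).le (inv_pos.mpr hα).le
    have h2 := mul_le_mul_of_nonneg_right ht hββ
    rw [hsq] at h2
    have h3 : t*(2*γ2*α^2+1)*(α⁻¹*α⁻¹) = 2*t*γ2*(α^2*(α⁻¹*α⁻¹)) + t*(α⁻¹*α⁻¹) := by ring
    rw [hsq] at h3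
    linarith
  have hc1 : 1 - 2*t*γ2 - t * ((lam i)⁻¹ * (nu j)⁻¹) ≤ 1 := by nlinarith
  have hc0 : 0 ≤ 1 - 2*t*γ2 - t * ((lam i)⁻¹ * (nu j)⁻¹) := by nlinarith
  have habs : |1 - 2*t*γ2 - t * ((lam i)⁻¹ * (nu j)⁻¹)| ≤ 1 := by
    rw [abs_of_nonneg hc0]; exact hc1
  calc |1 - 2*t*γ2 - t * ((lam i)⁻¹ * (nu j)⁻¹)| * |E i j| ≤ 1 * |E i j| :=
        mul_le_mul_of_nonneg_right habs (abs_nonneg _)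
    _ = |E i j| := one_mul _

end Contraction
section OneSided

lemma nonneg_of_right_local_min {g : ℝ → ℝ} {d ε : ℝ} (hd : HasDerivAt g d 0) (hε : 0 < ε)
    (h : ∀ s ∈ Set.Ioo (0:ℝ) ε, g 0 ≤ g s) : 0 ≤ d := by
  have htend := hasDerivAt_iff_tendsto_slope.mp hd
  have h2 : Filter.Tendsto (slope g 0) (nhdsWithin 0 (Set.Ioi 0)) (nhds d) :=
    htend.mono_left (nhdsWithin_mono 0 (fun x hx => ne_of_gt hx))
  apply ge_of_tendsto h2
  filter_upwards [Ioo_mem_nhdsGT_of_mem (Set.mem_Ico.mpr ⟨le_refl (0:ℝ), hε⟩)] with s hs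
  rw [slope_def_field]
  apply div_nonneg (by linarith [h s hs]) (by linarith [hs.1])

lemma nonpos_of_left_local_min {g : ℝ → ℝ} {d ε : ℝ} (hd : HasDerivAt g d 0) (hε : 0 < ε)
    (h : ∀ s ∈ Set.Ioo (-ε) (0:ℝ), g 0 ≤ g s) : d ≤ 0 := by
  have htend := hasDerivAt_iff_tendsto_slope.mp hd
  have h2 : Filter.Tendsto (slope g 0) (nhdsWithin 0 (Set.Iio 0)) (nhds d) :=
    htend.mono_left (nhdsWithin_mono 0 (fun x hx => ne_of_lt hx))
  apply le_of_tendsto h2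
  have hmem : Set.Ioo (-ε) (0:ℝ) ∈ nhdsWithin (0:ℝ) (Set.Iio 0) :=
    Ioo_mem_nhdsLT_of_mem (Set.mem_Ioc.mpr ⟨by linarith, le_refl (0:ℝ)⟩)
  filter_upwards [hmem] with s hs
  rw [slope_def_field]
  have hnum : 0 ≤ g s - g 0 := by linarith [h s hs]
  have hden : s - 0 ≤ 0 := by linarith [hs.2]
  exact div_nonpos_of_nonneg_of_nonpos hnum hden

end OneSided

section SmoothDeriv

variable {n : Type*} [Fintype n] [DecidableEq n]

lemma smooth_hasDeriv (S Q V : Matrix n n ℝ) (hQ : Q.PosDef) (γ2 : ℝ) :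
    HasDerivAt (fun s : ℝ => ((S * (Q + s • V)).trace : ℝ) - Real.log (Q + s • V).det
        + γ2 * frobNorm (Q + s • V)^2)
      ((S * V).trace - (Q⁻¹ * V).trace + γ2 * (2 * ∑ i, ∑ j, Q i j * V i j)) 0 := by
  -- trace part
  have e1 : (fun s : ℝ => ((S * (Q + s • V)).trace : ℝ)) =
      fun s => (S*Q).trace + s * (S*V).trace := by
    funext s
    rw [mul_add, Matrix.mul_smul, Matrix.trace_add, Matrix.trace_smul, smul_eq_mul]
  have h1 : HasDerivAt (fun s : ℝ => ((S * (Q + s • V)).trace : ℝ)) ((S*V).trace) 0 := by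
    rw [e1]
    simpa using ((hasDerivAt_id (0:ℝ)).mul_const ((S*V).trace)).const_add ((S*Q).trace)
  -- log det part
  have hdet : Q.det ≠ 0 := ne_of_gt hQ.det_pos
  have hQQ : Q * Q⁻¹ = 1 := Matrix.mul_nonsing_inv Q (isUnit_iff_ne_zero.mpr hdet)
  have hfact : ∀ s : ℝ, Q + s • V = Q * (1 + s • (Q⁻¹ * V)) := by
    intro s
    rw [mul_add, Matrix.mul_one, Matrix.mul_smul, ← Matrix.mul_assoc, hQQ, Matrix.one_mul]
  set P : Polynomial ℝ :=
    ((1 + (Polynomial.X : Polynomial ℝ) • (Q⁻¹*V).map Polynomial.C).det).divX.divX with hP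
  have e2 : (fun s : ℝ => Real.log (Q + s • V).det) =
      fun s => Real.log (Q.det * (1 + (Q⁻¹*V).trace * s + (P.eval s) * s^2)) := by
    funext s
    rw [hfact s, Matrix.det_mul, Matrix.det_one_add_smul s]
  have hu : HasDerivAt (fun s : ℝ => Q.det * (1 + (Q⁻¹*V).trace * s + (P.eval s) * s^2))
      (Q.det * (Q⁻¹*V).trace) 0 := by
    have ha : HasDerivAt (fun s : ℝ => 1 + (Q⁻¹*V).trace * s + (P.eval s) * s^2)
        ((Q⁻¹*V).trace) 0 := by
      have hb : HasDerivAt (fun s : ℝ => 1 + (Q⁻¹*V).trace * s) ((Q⁻¹*V).trace) 0 := by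
        simpa using ((hasDerivAt_id (0:ℝ)).const_mul ((Q⁻¹*V).trace)).const_add 1
      have hc : HasDerivAt (fun s : ℝ => (P.eval s) * s^2)
          (P.derivative.eval 0 * 0^2 + P.eval 0 * (2 * 0^1)) 0 :=
        (P.hasDerivAt 0).mul (hasDerivAt_pow 2 0)
      exact (hb.add hc).congr_deriv (by simp)
    simpa using ha.const_mul Q.det
  have h2 : HasDerivAt (fun s : ℝ => Real.log (Q + s • V).det) ((Q⁻¹*V).trace) 0 := by
    rw [e2]
    have hu0 : Q.det * (1 + (Q⁻¹*V).trace * 0 + (P.eval 0) * 0^2) ≠ 0 := by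
      simpa using hdet
    have hl := hu.log hu0
    have hval : Q.det * (Q⁻¹*V).trace / (Q.det * (1 + (Q⁻¹*V).trace * 0 + (P.eval 0) * 0^2)) = (Q⁻¹*V).trace := by
      field_simp
      simp
    convert hl using 1
    exact hval.symm
  -- frobenius part
  have e3 : (fun s : ℝ => γ2 * frobNorm (Q + s • V)^2) =
      fun s => γ2 * (∑ i, ∑ j, (Q i j + s * V i j)^2) := by
    funext s
    rw [frobNorm_sq]
    simp [Matrix.add_apply, Matrix.smul_apply]
  have h3 : HasDerivAt (fun s : ℝ => γ2 * frobNorm (Q + s • V)^2)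
      (γ2 * (2 * ∑ i, ∑ j, Q i j * V i j)) 0 := by
    rw [e3]
    have hsum : HasDerivAt (fun s : ℝ => ∑ i, ∑ j, (Q i j + s * V i j)^2)
        (∑ i, ∑ j, 2 * Q i j * V i j) 0 := by
      apply HasDerivAt.fun_sum
      intro i _
      apply HasDerivAt.fun_sum
      intro j _
      have := (((hasDerivAt_id (0:ℝ)).mul_const (V i j)).const_add (Q i j)).pow 2
      exact this.congr_deriv (by simp only [id]; ring)
    have hder := hsum.const_mul γ2
    have heq : γ2 * (2 * ∑ i, ∑ j, Q i j * V i j) = γ2 * ∑ i, ∑ j, 2 * Q i j * V i j := by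
      congr 1
      rw [Finset.mul_sum]
      exact Finset.sum_congr rfl (fun i _ => by
        rw [Finset.mul_sum]
        exact Finset.sum_congr rfl (fun j _ => by ring))
    rw [heq]
    exact hder
  exact (h1.sub h2).add h3

end SmoothDeriv
section Helpers

variable {n : Type*} [Fintype n] [DecidableEq n]

lemma trace_mul_stdBasis (A : Matrix n n ℝ) (i j : n) :
    (A * Matrix.single i j 1).trace = A j i := by
  rw [Matrix.trace]
  have hdiag : ∀ b, (A * Matrix.single i j 1).diag b
      = if b = j then A j i else 0 := by
    intro b
    simp only [Matrix.diag, Matrix.mul_apply, Matrix.single, Matrix.of_apply]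
    by_cases hb : b = j
    · subst hb
      rw [if_pos rfl, Finset.sum_eq_single i]
      · simp
      · intro l _ hl
        simp [Ne.symm hl]
      · intro h; exact absurd (Finset.mem_univ i) h
    · rw [if_neg hb]
      apply Finset.sum_eq_zero
      intro l _
      simp [Ne.symm hb]
  rw [Finset.sum_congr rfl (fun b _ => hdiag b)]
  simp

lemma sum_ite_pair (i j : n) (v : ℝ) :
    (∑ k, ∑ l, if k = i ∧ l = j then v else (0:ℝ)) = v := by
  rw [Finset.sum_eq_single i]
  · rw [Finset.sum_eq_single j]
    · simp
    · intro b _ hb; simp [hb]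
    · intro h; exact absurd (Finset.mem_univ j) h
  · intro k _ hk
    apply Finset.sum_eq_zero
    intro l _
    simp [hk]
  · intro h; exact absurd (Finset.mem_univ i) h

lemma sum_entry_mul_stdBasis (Q : Matrix n n ℝ) (i j : n) :
    ∑ k, ∑ l, Q k l * Matrix.single i j 1 k l = Q i j := by
  have key : ∀ k l, Q k l * Matrix.single i j 1 k l
      = if k = i ∧ l = j then Q i j else 0 := by
    intro k l
    simp only [Matrix.single, Matrix.of_apply]
    by_cases h : k = i ∧ l = j
    · obtain ⟨hk, hl⟩ := h
      rw [hk, hl]; simp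
    · rw [if_neg (fun hc => h ⟨hc.1.symm, hc.2.symm⟩), if_neg h]
      ring
  rw [Finset.sum_congr rfl (fun k _ => Finset.sum_congr rfl (fun l _ => key k l)),
    sum_ite_pair]

omit [DecidableEq n] in
lemma l1Norm_nonneg (A : Matrix n n ℝ) : 0 ≤ l1Norm A := by
  apply Finset.sum_nonneg
  intro i _
  exact Finset.sum_nonneg (fun j _ => abs_nonneg _)

omit [DecidableEq n] in
lemma l1_decomp (Q : Matrix n n ℝ) (X : Matrix n n ℝ) (v : n → n → ℝ)
    (key : ∀ k l, |X k l| = |Q k l| + v k l) :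
    l1Norm X = l1Norm Q + ∑ k, ∑ l, v k l := by
  unfold l1Norm
  rw [← Finset.sum_add_distrib]
  apply Finset.sum_congr rfl
  intro k _
  rw [← Finset.sum_add_distrib]
  apply Finset.sum_congr rfl
  intro l _
  exact key k l

lemma l1_diag (Q : Matrix n n ℝ) (i : n) (s : ℝ) :
    l1Norm (Q + s • Matrix.single i i 1) = l1Norm Q - |Q i i| + |Q i i + s| := by
  have key : ∀ k l, |((Q + s • Matrix.single i i 1 : Matrix n n ℝ)) k l| =
      |Q k l| + (if k = i ∧ l = i then |Q i i + s| - |Q i i| else 0) := by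
    intro k l
    by_cases h : k = i ∧ l = i
    · obtain ⟨hk, hl⟩ := h
      rw [hk, hl, if_pos ⟨rfl, rfl⟩]
      simp only [Matrix.add_apply, Matrix.smul_apply, Matrix.single, Matrix.of_apply,
        smul_eq_mul]
      norm_num
    · rw [if_neg h]
      simp only [Matrix.add_apply, Matrix.smul_apply, Matrix.single, Matrix.of_apply,
        if_neg (fun hc => h ⟨hc.1.symm, hc.2.symm⟩ : ¬(i = k ∧ i = l)), smul_eq_mul,
        mul_zero, add_zero]
  rw [l1_decomp Q _ _ key, sum_ite_pair]
  ring

lemma l1_offdiag (Q : Matrix n n ℝ) {i j : n} (hij : i ≠ j) (s : ℝ) :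
    l1Norm (Q + s • (Matrix.single i j 1 + Matrix.single j i 1)) =
      l1Norm Q - |Q i j| - |Q j i| + |Q i j + s| + |Q j i + s| := by
  have key : ∀ k l,
      |((Q + s • (Matrix.single i j 1 + Matrix.single j i 1) : Matrix n n ℝ)) k l| =
      |Q k l| + ((if k = i ∧ l = j then |Q i j + s| - |Q i j| else 0)
        + (if k = j ∧ l = i then |Q j i + s| - |Q j i| else 0)) := by
    intro k l
    by_cases h1 : k = i ∧ l = j
    · obtain ⟨hk, hl⟩ := h1
      rw [hk, hl, if_pos ⟨rfl, rfl⟩, if_neg (fun hc => hij hc.1)]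
      simp only [Matrix.add_apply, Matrix.smul_apply, Matrix.single, Matrix.of_apply,
        if_neg (fun hc => hij hc.1.symm : ¬(j = i ∧ i = j)), smul_eq_mul]
      norm_num
    · by_cases h2 : k = j ∧ l = i
      · obtain ⟨hk, hl⟩ := h2
        rw [hk, hl, if_neg (fun hc => hij hc.1.symm), if_pos ⟨rfl, rfl⟩]
        simp only [Matrix.add_apply, Matrix.smul_apply, Matrix.single, Matrix.of_apply,
          if_neg (fun hc => hij hc.1 : ¬(i = j ∧ j = i)), smul_eq_mul]
        norm_num
      · rw [if_neg h1, if_neg h2]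
        have e1 : ¬(i = k ∧ j = l) := fun hc => h1 ⟨hc.1.symm, hc.2.symm⟩
        have e2 : ¬(j = k ∧ i = l) := fun hc => h2 ⟨hc.1.symm, hc.2.symm⟩
        simp only [Matrix.add_apply, Matrix.smul_apply, Matrix.single, Matrix.of_apply,
          if_neg e1, if_neg e2, smul_eq_mul, mul_zero, add_zero]
  have hsum : (∑ k, ∑ l, ((if k = i ∧ l = j then |Q i j + s| - |Q i j| else (0:ℝ))
      + (if k = j ∧ l = i then |Q j i + s| - |Q j i| else 0)))
      = (|Q i j + s| - |Q i j|) + (|Q j i + s| - |Q j i|) := by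
    calc (∑ k, ∑ l, ((if k = i ∧ l = j then |Q i j + s| - |Q i j| else (0:ℝ))
          + (if k = j ∧ l = i then |Q j i + s| - |Q j i| else 0)))
        = ∑ k, ((∑ l, (if k = i ∧ l = j then |Q i j + s| - |Q i j| else (0:ℝ)))
          + (∑ l, (if k = j ∧ l = i then |Q j i + s| - |Q j i| else (0:ℝ)))) := by
          apply Finset.sum_congr rfl
          intro k _
          rw [Finset.sum_add_distrib]
      _ = (∑ k, ∑ l, (if k = i ∧ l = j then |Q i j + s| - |Q i j| else (0:ℝ)))
          + (∑ k, ∑ l, (if k = j ∧ l = i then |Q j i + s| - |Q j i| else (0:ℝ))) :=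
          Finset.sum_add_distrib
      _ = (|Q i j + s| - |Q i j|) + (|Q j i + s| - |Q j i|) := by
          rw [sum_ite_pair, sum_ite_pair]
  rw [l1_decomp Q _ _ key, hsum]
  ring

omit [DecidableEq n] in
lemma quad_abs_le_l1 (V : Matrix n n ℝ) (x : n → ℝ) :
    |x ⬝ᵥ (V *ᵥ x)| ≤ l1Norm V * (x ⬝ᵥ x) := by
  have hx2 : ∀ k, (x k)^2 ≤ x ⬝ᵥ x := by
    intro k
    rw [dotProduct, pow_two]
    apply Finset.single_le_sum (f := fun l => x l * x l) (fun l _ => mul_self_nonneg _)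
      (Finset.mem_univ k)
  have hxx : ∀ k l, |x k| * |x l| ≤ x ⬝ᵥ x := by
    intro k l
    nlinarith [hx2 k, hx2 l, sq_abs (x k), sq_abs (x l), sq_nonneg (|x k| - |x l|)]
  have hexp : x ⬝ᵥ (V *ᵥ x) = ∑ k, ∑ l, x k * (V k l * x l) := by
    simp only [dotProduct, Matrix.mulVec, Finset.mul_sum]
  rw [hexp]
  calc |∑ k, ∑ l, x k * (V k l * x l)| ≤ ∑ k, |∑ l, x k * (V k l * x l)| :=
        Finset.abs_sum_le_sum_abs _ _
    _ ≤ ∑ k, ∑ l, |x k * (V k l * x l)| :=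
        Finset.sum_le_sum (fun k _ => Finset.abs_sum_le_sum_abs _ _)
    _ ≤ ∑ k, ∑ l, |V k l| * (x ⬝ᵥ x) := by
        apply Finset.sum_le_sum
        intro k _
        apply Finset.sum_le_sum
        intro l _
        rw [abs_mul, abs_mul]
        calc |x k| * (|V k l| * |x l|) = |V k l| * (|x k| * |x l|) := by ring
          _ ≤ |V k l| * (x ⬝ᵥ x) := mul_le_mul_of_nonneg_left (hxx k l) (abs_nonneg _)
    _ = l1Norm V * (x ⬝ᵥ x) := by
        rw [l1Norm, Finset.sum_mul]
        apply Finset.sum_congr rfl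
        intro k _
        rw [Finset.sum_mul]

omit [DecidableEq n] in
lemma dot_self_pos {x : n → ℝ} (hx : x ≠ 0) : 0 < x ⬝ᵥ x := by
  have h0 : 0 ≤ x ⬝ᵥ x := Finset.sum_nonneg (fun i _ => mul_self_nonneg _)
  rcases h0.eq_or_lt with h|h
  · exact absurd (dotProduct_self_eq_zero.mp h.symm) hx
  · exact h

lemma posdef_perturb [Nonempty n] {Q : Matrix n n ℝ} (hQ : Q.PosDef)
    (V : Matrix n n ℝ) (hV : V.IsHermitian) :
    ∃ ε > 0, ∀ s : ℝ, |s| < ε → (Q + s • V).PosDef := by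
  obtain ⟨i₀, hi₀⟩ := Finite.exists_min hQ.1.eigenvalues
  set c := hQ.1.eigenvalues i₀ with hc
  have hcpos : 0 < c := hQ.eigenvalues_pos i₀
  have hlow : (Q - c • (1 : Matrix n n ℝ)).PosSemidef := loewner_of_eig_ge hQ.1 hi₀
  refine ⟨c / (l1Norm V + 1), div_pos hcpos (by linarith [l1Norm_nonneg V]), ?_⟩
  intro s hs
  apply Matrix.PosDef.of_dotProduct_mulVec_pos
  · unfold Matrix.IsHermitian
    rw [Matrix.conjTranspose_add, Matrix.conjTranspose_smul, hQ.1.eq, hV.eq]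
    simp
  · intro x hx
    rw [star_trivial_vec]
    have hxx : 0 < x ⬝ᵥ x := dot_self_pos hx
    have hexp : x ⬝ᵥ ((Q + s • V) *ᵥ x) = x ⬝ᵥ (Q *ᵥ x) + s * (x ⬝ᵥ (V *ᵥ x)) := by
      rw [Matrix.add_mulVec, dotProduct_add, Matrix.smul_mulVec,
        dotProduct_smul, smul_eq_mul]
    rw [hexp]
    have h1 : c * (x ⬝ᵥ x) ≤ x ⬝ᵥ (Q *ᵥ x) := quad_ge_of_loewner hlow x
    have h2 : |s * (x ⬝ᵥ (V *ᵥ x))| ≤ |s| * (l1Norm V * (x ⬝ᵥ x)) := by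
      rw [abs_mul]
      exact mul_le_mul_of_nonneg_left (quad_abs_le_l1 V x) (abs_nonneg s)
    have h3 : |s| * (l1Norm V + 1) < c :=
      (lt_div_iff₀ (by linarith [l1Norm_nonneg V])).mp hs
    have h4 : |s| * l1Norm V < c := by
      nlinarith [abs_nonneg s, l1Norm_nonneg V]
    linarith [h1, h2, neg_abs_le (s * (x ⬝ᵥ (V *ᵥ x))), mul_lt_mul_of_pos_right h4 hxx]

end Helpers
section Opt

variable {n : Type*} [Fintype n] [DecidableEq n]

lemma herm_symm {A : Matrix n n ℝ} (hA : A.IsHermitian) (a b : n) : A b a = A a b := by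
  have h := congrFun (congrFun hA a) b
  rw [Matrix.conjTranspose_apply] at h
  simpa using h

lemma diag_pos_of_posdef {Q : Matrix n n ℝ} (hQ : Q.PosDef) (i : n) : 0 < Q i i := by
  have hsing : (Pi.single i (1:ℝ)) ≠ (0 : n → ℝ) := by
    intro hcon
    have := congrFun hcon i
    simp at this
  have h2 := hQ.dotProduct_mulVec_pos hsing
  rw [star_trivial_vec] at h2
  have hval : Pi.single i (1:ℝ) ⬝ᵥ (Q *ᵥ Pi.single i 1) = Q i i := by
    rw [Matrix.mulVec_single, dotProduct, Finset.sum_eq_single i]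
    · simp
    · intro b _ hb; simp [Pi.single_apply, hb]
    · intro h; exact absurd (Finset.mem_univ i) h
  rw [hval] at h2
  exact h2

lemma opt_conditions [Nonempty n] (S : Matrix n n ℝ) (hS : S.IsHermitian)
    (γ1 γ2 : ℝ) (hγ1 : 0 < γ1) (hγ2 : 0 < γ2)
    {Q : Matrix n n ℝ} (hQ : Q.PosDef)
    (hmin : ∀ M : Matrix n n ℝ, M.PosDef → genObj S γ1 γ2 Q ≤ genObj S γ1 γ2 M)
    (i j : n) :
    (Q i j ≠ 0 → (S - Q⁻¹ + (2*γ2) • Q) i j = -γ1 * Real.sign (Q i j)) ∧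
    (Q i j = 0 → |(S - Q⁻¹ + (2*γ2) • Q) i j| ≤ γ1) := by
  have hWentry : ∀ a b, (S - Q⁻¹ + (2*γ2) • Q) a b = S a b - Q⁻¹ a b + 2*γ2*Q a b := by
    intro a b
    simp only [Matrix.sub_apply, Matrix.add_apply, Matrix.smul_apply, smul_eq_mul]
  by_cases hij : i = j
  · -- diagonal case
    subst hij
    set V : Matrix n n ℝ := Matrix.single i i 1 with hV
    have hVH : V.IsHermitian := by
      unfold Matrix.IsHermitian
      ext a b
      rw [Matrix.conjTranspose_apply, star_trivial]
      simp only [hV, Matrix.single, Matrix.of_apply]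
      exact if_congr and_comm rfl rfl
    obtain ⟨ε, hε, hpd⟩ := posdef_perturb hQ V hVH
    set φ : ℝ → ℝ := fun s => ((S * (Q + s • V)).trace : ℝ) - Real.log (Q + s • V).det
        + γ2 * frobNorm (Q + s • V)^2 with hφdef
    set f : ℝ → ℝ := fun s => genObj S γ1 γ2 (Q + s • V) with hfdef
    have hfφ : ∀ s, f s = φ s + γ1 * l1Norm (Q + s • V) := by
      intro s
      simp only [hfdef, hφdef, genObj]
      ring
    have hQ0 : Q + (0:ℝ) • V = Q := by rw [zero_smul, add_zero]
    have hf0 : ∀ s, |s| < ε → f 0 ≤ f s := by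
      intro s hs
      simp only [hfdef, hQ0]
      exact hmin _ (hpd s hs)
    have ha : 0 < Q i i := diag_pos_of_posdef hQ i
    have hφd : HasDerivAt φ (S i i - Q⁻¹ i i + γ2 * (2 * Q i i)) 0 := by
      have := smooth_hasDeriv S Q V hQ γ2
      rwa [hV, trace_mul_stdBasis, trace_mul_stdBasis, sum_entry_mul_stdBasis] at this
    set C : ℝ := l1Norm Q - |Q i i| + Q i i with hC
    set g : ℝ → ℝ := fun s => φ s + γ1 * (C + 1 * s) with hg
    have hgd : HasDerivAt g ((S i i - Q⁻¹ i i + γ2 * (2 * Q i i)) + γ1 * 1) 0 := by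
      apply hφd.add
      have hlin : HasDerivAt (fun s : ℝ => C + 1 * s) 1 0 := by
        simpa using ((hasDerivAt_id (0:ℝ)).const_mul (1:ℝ)).const_add C
      exact hlin.const_mul γ1
    have hloc : IsLocalMin g 0 := by
      have hδ : 0 < min ε (Q i i) := lt_min hε ha
      have hmem : Set.Ioo (-(min ε (Q i i))) (min ε (Q i i)) ∈ nhds (0:ℝ) :=
        Ioo_mem_nhds (by linarith) hδ
      show ∀ᶠ s in nhds (0:ℝ), g 0 ≤ g s
      filter_upwards [hmem] with s hs
      have hsε : |s| < ε := by
        rw [abs_lt]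
        constructor
        · have := hs.1; have h2 := min_le_left ε (Q i i); linarith
        · have := hs.2; have h2 := min_le_left ε (Q i i); linarith
      have hsa : -(Q i i) < s := by
        have := hs.1; have h2 := min_le_right ε (Q i i); linarith
      have habs : |Q i i + s| = Q i i + s := abs_of_pos (by linarith)
      have e1 : g s = f s := by
        rw [hfφ s, hg, hV, l1_diag, habs, hC]
        ring_nf
      have e0 : g 0 = f 0 := by
        rw [hfφ 0, hg, hV, l1_diag, hC]
        have : |Q i i + 0| = Q i i + 0 := abs_of_pos (by linarith)
        rw [this]
        have h1 : |Q i i| = Q i i := abs_of_pos ha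
        rw [h1]
        ring_nf
      rw [e0, e1]
      exact hf0 s hsε
    have hzero := hloc.hasDerivAt_eq_zero hgd
    constructor
    · intro _
      rw [hWentry, Real.sign_of_pos ha]
      linarith
    · intro h0
      exact absurd h0 (ne_of_gt ha)
  · -- off-diagonal case
    set V : Matrix n n ℝ := Matrix.single i j 1 + Matrix.single j i 1 with hV
    have hVH : V.IsHermitian := by
      unfold Matrix.IsHermitian
      ext a b
      rw [Matrix.conjTranspose_apply, star_trivial]
      simp only [hV, Matrix.add_apply, Matrix.single, Matrix.of_apply]
      rw [add_comm]
      congr 1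
      · exact if_congr and_comm rfl rfl
      · exact if_congr and_comm rfl rfl
    obtain ⟨ε, hε, hpd⟩ := posdef_perturb hQ V hVH
    set φ : ℝ → ℝ := fun s => ((S * (Q + s • V)).trace : ℝ) - Real.log (Q + s • V).det
        + γ2 * frobNorm (Q + s • V)^2 with hφdef
    set f : ℝ → ℝ := fun s => genObj S γ1 γ2 (Q + s • V) with hfdef
    have hfφ : ∀ s, f s = φ s + γ1 * l1Norm (Q + s • V) := by
      intro s
      simp only [hfdef, hφdef, genObj]
      ring
    have hQ0 : Q + (0:ℝ) • V = Q := by rw [zero_smul, add_zero]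
    have hf0 : ∀ s, |s| < ε → f 0 ≤ f s := by
      intro s hs
      simp only [hfdef, hQ0]
      exact hmin _ (hpd s hs)
    have hsymQ : Q j i = Q i j := herm_symm hQ.1 i j
    have hsymS : S j i = S i j := herm_symm hS i j
    have hsymQi : Q⁻¹ j i = Q⁻¹ i j := herm_symm (hQ.inv).1 i j
    have hφd : HasDerivAt φ (2 * (S i j - Q⁻¹ i j + 2*γ2 * Q i j)) 0 := by
      have h := smooth_hasDeriv S Q V hQ γ2
      have e1 : (S * V).trace = 2 * S i j := by
        rw [hV, mul_add, Matrix.trace_add, trace_mul_stdBasis, trace_mul_stdBasis, hsymS]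
        ring
      have e2 : (Q⁻¹ * V).trace = 2 * Q⁻¹ i j := by
        rw [hV, mul_add, Matrix.trace_add, trace_mul_stdBasis, trace_mul_stdBasis, hsymQi]
        ring
      have e3 : (∑ k, ∑ l, Q k l * V k l) = 2 * Q i j := by
        have : ∀ k l, Q k l * V k l = Q k l * Matrix.single i j 1 k l
            + Q k l * Matrix.single j i 1 k l := by
          intro k l
          rw [hV, Matrix.add_apply]
          ring
        rw [Finset.sum_congr rfl (fun k _ => Finset.sum_congr rfl (fun l _ => this k l))]
        rw [Finset.sum_congr rfl (fun k _ => Finset.sum_add_distrib), Finset.sum_add_distrib,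
          sum_entry_mul_stdBasis, sum_entry_mul_stdBasis, hsymQ]
        ring
      rw [e1, e2, e3] at h
      convert h using 1
      ring
    set C : ℝ := l1Norm Q - |Q i j| - |Q j i| + 2 * Q i j with hC
    constructor
    · intro hne
      rcases hne.lt_or_gt with haneg|hapos
      · -- Q i j < 0
        set g : ℝ → ℝ := fun s => φ s + γ1 * ((l1Norm Q - |Q i j| - |Q j i| - 2 * Q i j) + (-2) * s)
          with hg
        have hgd : HasDerivAt g (2 * (S i j - Q⁻¹ i j + 2*γ2 * Q i j) + γ1 * (-2)) 0 := by
          apply hφd.add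
          have hlin : HasDerivAt (fun s : ℝ => (l1Norm Q - |Q i j| - |Q j i| - 2 * Q i j)
              + (-2) * s) (-2) 0 := by
            simpa using ((hasDerivAt_id (0:ℝ)).const_mul (-2:ℝ)).const_add
              (l1Norm Q - |Q i j| - |Q j i| - 2 * Q i j)
          exact hlin.const_mul γ1
        have hloc : IsLocalMin g 0 := by
          have hδ : 0 < min ε (-(Q i j)) := lt_min hε (by linarith)
          have hmem : Set.Ioo (-(min ε (-(Q i j)))) (min ε (-(Q i j))) ∈ nhds (0:ℝ) :=
            Ioo_mem_nhds (by linarith) hδ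
          show ∀ᶠ s in nhds (0:ℝ), g 0 ≤ g s
          filter_upwards [hmem] with s hs
          have hsε : |s| < ε := by
            rw [abs_lt]
            have h1 := min_le_left ε (-(Q i j))
            exact ⟨by linarith [hs.1], by linarith [hs.2]⟩
          have hsa : s < -(Q i j) := lt_of_lt_of_le hs.2 (min_le_right _ _)
          have habs : |Q i j + s| = -(Q i j + s) := abs_of_neg (by linarith)
          have e1 : g s = f s := by
            rw [hfφ s, hg, hV, l1_offdiag Q hij, habs, hsymQ, habs]
            ring_nf
          have e0 : g 0 = f 0 := by
            rw [hfφ 0, hg, hV, l1_offdiag Q hij, hsymQ]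
            have h1 : |Q i j + 0| = -(Q i j + 0) := abs_of_neg (by linarith)
            rw [h1]
            have h2 : |Q i j| = -(Q i j) := abs_of_neg haneg
            rw [h2]
            ring_nf
          rw [e0, e1]
          exact hf0 s hsε
        have hzero := hloc.hasDerivAt_eq_zero hgd
        rw [hWentry, Real.sign_of_neg haneg]
        linarith
      · -- 0 < Q i j
        set g : ℝ → ℝ := fun s => φ s + γ1 * ((l1Norm Q - |Q i j| - |Q j i| + 2 * Q i j) + 2 * s)
          with hg
        have hgd : HasDerivAt g (2 * (S i j - Q⁻¹ i j + 2*γ2 * Q i j) + γ1 * 2) 0 := by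
          apply hφd.add
          have hlin : HasDerivAt (fun s : ℝ => (l1Norm Q - |Q i j| - |Q j i| + 2 * Q i j)
              + 2 * s) 2 0 := by
            simpa using ((hasDerivAt_id (0:ℝ)).const_mul (2:ℝ)).const_add
              (l1Norm Q - |Q i j| - |Q j i| + 2 * Q i j)
          exact hlin.const_mul γ1
        have hloc : IsLocalMin g 0 := by
          have hδ : 0 < min ε (Q i j) := lt_min hε hapos
          have hmem : Set.Ioo (-(min ε (Q i j))) (min ε (Q i j)) ∈ nhds (0:ℝ) :=
            Ioo_mem_nhds (by linarith) hδ
          show ∀ᶠ s in nhds (0:ℝ), g 0 ≤ g s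
          filter_upwards [hmem] with s hs
          have hsε : |s| < ε := by
            rw [abs_lt]
            have h1 := min_le_left ε (Q i j)
            exact ⟨by linarith [hs.1], by linarith [hs.2]⟩
          have hsa : -(Q i j) < s := by
            have h2 := min_le_right ε (Q i j)
            linarith [hs.1]
          have habs : |Q i j + s| = Q i j + s := abs_of_pos (by linarith)
          have e1 : g s = f s := by
            rw [hfφ s, hg, hV, l1_offdiag Q hij, habs, hsymQ, habs]
            ring_nf
          have e0 : g 0 = f 0 := by
            rw [hfφ 0, hg, hV, l1_offdiag Q hij, hsymQ]
            have h1 : |Q i j + 0| = Q i j + 0 := abs_of_pos (by linarith)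
            rw [h1]
            have h2 : |Q i j| = Q i j := abs_of_pos hapos
            rw [h2]
            ring_nf
          rw [e0, e1]
          exact hf0 s hsε
        have hzero := hloc.hasDerivAt_eq_zero hgd
        rw [hWentry, Real.sign_of_pos hapos]
        linarith
    · intro h0
      -- Q i j = 0 : one-sided arguments
      set gp : ℝ → ℝ := fun s => φ s + γ1 * ((l1Norm Q - |Q i j| - |Q j i|) + 2 * s) with hgp
      have hgpd : HasDerivAt gp (2 * (S i j - Q⁻¹ i j + 2*γ2 * Q i j) + γ1 * 2) 0 := by
        apply hφd.add
        have hlin : HasDerivAt (fun s : ℝ => (l1Norm Q - |Q i j| - |Q j i|) + 2 * s) 2 0 := by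
          simpa using ((hasDerivAt_id (0:ℝ)).const_mul (2:ℝ)).const_add
            (l1Norm Q - |Q i j| - |Q j i|)
        exact hlin.const_mul γ1
      have hrights : ∀ s ∈ Set.Ioo (0:ℝ) ε, gp 0 ≤ gp s := by
        intro s hs
        have hsε : |s| < ε := by
          rw [abs_of_pos hs.1]; exact hs.2
        have e1 : gp s = f s := by
          rw [hfφ s, hgp, hV, l1_offdiag Q hij, hsymQ, h0]
          have habs : |(0:ℝ) + s| = s := by rw [zero_add, abs_of_pos hs.1]
          rw [habs]
          ring_nf
        have e0 : gp 0 = f 0 := by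
          rw [hfφ 0, hgp, hV, l1_offdiag Q hij, hsymQ, h0]
          norm_num
        rw [e0, e1]
        exact hf0 s hsε
      have hub := nonneg_of_right_local_min hgpd hε hrights
      set gm : ℝ → ℝ := fun s => φ s + γ1 * ((l1Norm Q - |Q i j| - |Q j i|) + (-2) * s) with hgm
      have hgmd : HasDerivAt gm (2 * (S i j - Q⁻¹ i j + 2*γ2 * Q i j) + γ1 * (-2)) 0 := by
        apply hφd.add
        have hlin : HasDerivAt (fun s : ℝ => (l1Norm Q - |Q i j| - |Q j i|) + (-2) * s) (-2) 0 := by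
          simpa using ((hasDerivAt_id (0:ℝ)).const_mul (-2:ℝ)).const_add
            (l1Norm Q - |Q i j| - |Q j i|)
        exact hlin.const_mul γ1
      have hlefts : ∀ s ∈ Set.Ioo (-ε) (0:ℝ), gm 0 ≤ gm s := by
        intro s hs
        have hsε : |s| < ε := by
          rw [abs_of_neg hs.2]; linarith [hs.1]
        have e1 : gm s = f s := by
          rw [hfφ s, hgm, hV, l1_offdiag Q hij, hsymQ, h0]
          have habs : |(0:ℝ) + s| = -s := by rw [zero_add, abs_of_neg hs.2]
          rw [habs]
          ring_nf
        have e0 : gm 0 = f 0 := by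
          rw [hfφ 0, hgm, hV, l1_offdiag Q hij, hsymQ, h0]
          norm_num
        rw [e0, e1]
        exact hf0 s hsε
      have hlb := nonpos_of_left_local_min hgmd hε hlefts
      rw [hWentry]
      rw [abs_le]
      constructor <;> linarith

end Opt
section Final

variable {n : Type*} [Fintype n] [DecidableEq n]

omit [DecidableEq n] in
lemma dot_self_nonneg (x : n → ℝ) : 0 ≤ x ⬝ᵥ x :=
  Finset.sum_nonneg (fun i _ => mul_self_nonneg _)

lemma quad_le_specNorm (A : Matrix n n ℝ) (x : n → ℝ) :
    x ⬝ᵥ (A *ᵥ x) ≤ specNorm A * (x ⬝ᵥ x) := by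
  set T := Matrix.toEuclideanCLM (𝕜 := ℝ) A with hT
  set y : EuclideanSpace ℝ n := WithLp.toLp 2 x with hy
  have hTy : T y = WithLp.toLp 2 (A *ᵥ x) := by
    rw [hy, hT, Matrix.toEuclideanCLM_toLp]
  have hinner : (inner ℝ y (T y) : ℝ) = x ⬝ᵥ (A *ᵥ x) := by
    rw [hTy, hy, EuclideanSpace.inner_toLp_toLp, star_trivial_vec, dotProduct_comm]
  have hyy : (inner ℝ y y : ℝ) = x ⬝ᵥ x := by
    rw [hy, EuclideanSpace.inner_toLp_toLp, star_trivial_vec]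
  have h1 : (inner ℝ y (T y) : ℝ) ≤ ‖y‖ * ‖T y‖ := real_inner_le_norm y (T y)
  have h2 : ‖T y‖ ≤ ‖T‖ * ‖y‖ := T.le_opNorm y
  have h3 : (inner ℝ y (T y) : ℝ) ≤ ‖T‖ * (‖y‖ * ‖y‖) := by
    nlinarith [norm_nonneg y, norm_nonneg (T y), norm_nonneg T]
  have h8 : ‖y‖ * ‖y‖ = x ⬝ᵥ x := by
    rw [← real_inner_self_eq_norm_mul_norm, hyy]
  have hgoal : specNorm A = ‖T‖ := by rw [hT, specNorm]
  rw [hinner, h8] at h3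
  rw [hgoal]
  exact h3

omit [DecidableEq n] in
lemma quad_le_frobNorm (A : Matrix n n ℝ) (x : n → ℝ) :
    x ⬝ᵥ (A *ᵥ x) ≤ frobNorm A * (x ⬝ᵥ x) := by
  have hexp : x ⬝ᵥ (A *ᵥ x) = ∑ q : n × n, A q.1 q.2 * (x q.1 * x q.2) := by
    rw [Fintype.sum_prod_type]
    simp only [dotProduct, Matrix.mulVec, Finset.mul_sum]
    apply Finset.sum_congr rfl
    intro k _
    apply Finset.sum_congr rfl
    intro l _
    ring
  have hcs := Finset.sum_mul_sq_le_sq_mul_sq Finset.univ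
    (fun q : n × n => A q.1 q.2) (fun q : n × n => x q.1 * x q.2)
  have hfa : (∑ q : n × n, (A q.1 q.2)^2) = frobNorm A ^ 2 := by
    rw [frobNorm_sq, Fintype.sum_prod_type]
  have hfx : (∑ q : n × n, (x q.1 * x q.2)^2) = (x ⬝ᵥ x)^2 := by
    rw [Fintype.sum_prod_type, dotProduct, sq, Finset.sum_mul_sum]
    apply Finset.sum_congr rfl
    intro k _
    apply Finset.sum_congr rfl
    intro l _
    ring
  rw [hfa, hfx] at hcs
  have habs : |∑ q : n × n, A q.1 q.2 * (x q.1 * x q.2)| ≤ frobNorm A * (x ⬝ᵥ x) := by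
    have hnn : 0 ≤ frobNorm A * (x ⬝ᵥ x) := mul_nonneg (frobNorm_nonneg A) (dot_self_nonneg x)
    calc |∑ q : n × n, A q.1 q.2 * (x q.1 * x q.2)|
        = Real.sqrt ((∑ q : n × n, A q.1 q.2 * (x q.1 * x q.2))^2) :=
          (Real.sqrt_sq_eq_abs _).symm
      _ ≤ Real.sqrt (frobNorm A ^ 2 * (x ⬝ᵥ x)^2) := Real.sqrt_le_sqrt hcs
      _ = frobNorm A * (x ⬝ᵥ x) := by
          rw [← mul_pow, Real.sqrt_sq hnn]
  rw [hexp]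
  exact le_trans (le_abs_self _) habs

lemma alpha_pos' {c γ2 α : ℝ} (hγ2 : 0 < γ2)
    (hα : α⁻¹ = (c + Real.sqrt (c^2 + 8*γ2)) / 2) : 0 < α := by
  have h1 : |c| < Real.sqrt (c^2 + 8*γ2) := by
    have : |c| = Real.sqrt (c^2) := by rw [Real.sqrt_sq_eq_abs]
    rw [this]
    apply Real.sqrt_lt_sqrt (sq_nonneg c)
    linarith
  have h2 : 0 < α⁻¹ := by
    rw [hα]
    have := neg_abs_le c
    linarith
  exact inv_pos.mp h2

omit [DecidableEq n] in
lemma quad_abs_le_entrybound {W : Matrix n n ℝ} {γ : ℝ} (hγ : 0 ≤ γ)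
    (hW : ∀ i j, |W i j| ≤ γ) (x : n → ℝ) :
    |x ⬝ᵥ (W *ᵥ x)| ≤ γ * (∑ i, |x i|)^2 := by
  have hexp : x ⬝ᵥ (W *ᵥ x) = ∑ k, ∑ l, x k * (W k l * x l) := by
    simp only [dotProduct, Matrix.mulVec, Finset.mul_sum]
  rw [hexp]
  calc |∑ k, ∑ l, x k * (W k l * x l)| ≤ ∑ k, ∑ l, |x k * (W k l * x l)| :=
        le_trans (Finset.abs_sum_le_sum_abs _ _)
          (Finset.sum_le_sum (fun k _ => Finset.abs_sum_le_sum_abs _ _))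
    _ ≤ ∑ k, ∑ l, γ * (|x k| * |x l|) := by
        apply Finset.sum_le_sum
        intro k _
        apply Finset.sum_le_sum
        intro l _
        rw [abs_mul, abs_mul]
        calc |x k| * (|W k l| * |x l|) = |W k l| * (|x k| * |x l|) := by ring
          _ ≤ γ * (|x k| * |x l|) :=
            mul_le_mul_of_nonneg_right (hW k l) (mul_nonneg (abs_nonneg _) (abs_nonneg _))
    _ = γ * (∑ i, |x i|)^2 := by
        rw [sq, Finset.sum_mul_sum, Finset.mul_sum]
        apply Finset.sum_congr rfl
        intro k _
        rw [Finset.mul_sum]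

lemma qstar_loewner [Nonempty n] (S : Matrix n n ℝ) (hS : S.IsHermitian)
    (γ1 γ2 α : ℝ) (hγ1 : 0 < γ1) (hγ2 : 0 < γ2)
    {Q : Matrix n n ℝ} (hQ : Q.PosDef)
    (hW : ∀ i j, |(S - Q⁻¹ + (2*γ2) • Q) i j| ≤ γ1)
    (hα : α⁻¹ = (maxEig S + γ1 * (Fintype.card n) +
      Real.sqrt ((maxEig S + γ1 * (Fintype.card n))^2 + 8*γ2)) / 2) :
    (Q - α • (1 : Matrix n n ℝ)).PosSemidef := by
  set c : ℝ := maxEig S + γ1 * (Fintype.card n) with hc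
  have hαpos : 0 < α := alpha_pos' hγ2 hα
  obtain ⟨i₀, hi₀⟩ := Finite.exists_min hQ.1.eigenvalues
  set a := hQ.1.eigenvalues i₀ with ha
  have hapos : 0 < a := hQ.eigenvalues_pos i₀
  -- eigenvector
  set v : n → ℝ := ⇑(hQ.1.eigenvectorBasis i₀) with hv
  have hQv : Q *ᵥ v = a • v := hQ.1.mulVec_eigenvectorBasis i₀
  have hsv : (star (hQ.1.eigenvectorUnitary : Matrix n n ℝ)) *ᵥ v = Pi.single i₀ 1 :=
    Matrix.IsHermitian.star_eigenvectorUnitary_mulVec hQ.1 i₀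
  have hvv : v ⬝ᵥ v = 1 := by
    have hn := starU_norm hQ.1 v
    rw [hsv] at hn
    rw [← hn]
    simp [dotProduct, Pi.single_apply]
  have hdet : IsUnit Q.det := isUnit_iff_ne_zero.mpr (ne_of_gt hQ.det_pos)
  have hQinvv : Q⁻¹ *ᵥ v = a⁻¹ • v := by
    have h1 : Q⁻¹ *ᵥ (Q *ᵥ v) = v := by
      rw [Matrix.mulVec_mulVec, Matrix.nonsing_inv_mul Q hdet, Matrix.one_mulVec]
    rw [hQv, Matrix.mulVec_smul] at h1
    calc Q⁻¹ *ᵥ v = a⁻¹ • (a • (Q⁻¹ *ᵥ v)) := by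
          rw [smul_smul, inv_mul_cancel₀ (ne_of_gt hapos), one_smul]
      _ = a⁻¹ • v := by rw [h1]
  have hqa : v ⬝ᵥ (Q *ᵥ v) = a := by
    rw [hQv, dotProduct_smul, smul_eq_mul, hvv, mul_one]
  have hqi : v ⬝ᵥ (Q⁻¹ *ᵥ v) = a⁻¹ := by
    rw [hQinvv, dotProduct_smul, smul_eq_mul, hvv, mul_one]
  set W : Matrix n n ℝ := S - Q⁻¹ + (2*γ2) • Q with hWdef
  have hqinv_eq : v ⬝ᵥ (Q⁻¹ *ᵥ v) =
      v ⬝ᵥ (S *ᵥ v) + (2*γ2) * (v ⬝ᵥ (Q *ᵥ v)) - v ⬝ᵥ (W *ᵥ v) := by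
    have hQi : Q⁻¹ = S + (2*γ2) • Q - W := by rw [hWdef]; abel
    conv_lhs => rw [hQi]
    rw [Matrix.sub_mulVec, Matrix.add_mulVec, Matrix.smul_mulVec,
      dotProduct_sub, dotProduct_add, dotProduct_smul, smul_eq_mul]
  have hS1 : v ⬝ᵥ (S *ᵥ v) ≤ maxEig S := by
    have h := quad_le_maxEig hS v
    rwa [hvv, mul_one] at h
  have hWqb : |v ⬝ᵥ (W *ᵥ v)| ≤ γ1 * (∑ i, |v i|)^2 :=
    quad_abs_le_entrybound (le_of_lt hγ1) hW v
  have hl1 : (∑ i, |v i|)^2 ≤ (Fintype.card n : ℝ) := by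
    have hcs := Finset.sum_mul_sq_le_sq_mul_sq Finset.univ (fun i : n => |v i|) (fun _ : n => (1:ℝ))
    have e1 : (∑ i, |v i| * 1) = ∑ i, |v i| := by simp
    have e2 : (∑ i : n, |v i|^2) = v ⬝ᵥ v := by
      rw [dotProduct]
      apply Finset.sum_congr rfl
      intro i _
      rw [sq_abs, sq]
    have e3 : (∑ _i : n, (1:ℝ)^2) = (Fintype.card n : ℝ) := by simp
    rw [e1, e2, e3, hvv, one_mul] at hcs
    exact hcs
  have hquad : a⁻¹ ≤ c + 2*γ2 * a := by
    have h := hqinv_eq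
    rw [hqa, hqi] at h
    have h2 : γ1 * (∑ i, |v i|)^2 ≤ γ1 * (Fintype.card n : ℝ) :=
      mul_le_mul_of_nonneg_left hl1 (le_of_lt hγ1)
    have h3 := neg_abs_le (v ⬝ᵥ (W *ᵥ v))
    have h4 : maxEig S + γ1 * (Fintype.card n : ℝ) = c := by rw [hc]
    linarith [hS1, hWqb]
  set r := Real.sqrt (c^2 + 8*γ2) with hr
  have hr2 : r^2 = c^2 + 8*γ2 := Real.sq_sqrt (by positivity)
  have hr0 : 0 ≤ r := Real.sqrt_nonneg _
  have hb0 : 0 < a⁻¹ := inv_pos.mpr hapos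
  have hab : a * a⁻¹ = 1 := mul_inv_cancel₀ (ne_of_gt hapos)
  have hb2 : (a⁻¹)^2 ≤ c*(a⁻¹) + 2*γ2 := by
    have h5 := mul_le_mul_of_nonneg_right hquad (le_of_lt hb0)
    nlinarith [hab]
  have hble : a⁻¹ ≤ (c + r)/2 := by
    have key : (2*(a⁻¹) - c)^2 ≤ r^2 := by
      rw [hr2]
      nlinarith [hb2]
    rcases le_or_gt (2*(a⁻¹) - c) 0 with hcase|hcase
    · linarith
    · have h4 : 2*(a⁻¹) - c ≤ r := by
        have hs1 : 2*(a⁻¹) - c = Real.sqrt ((2*(a⁻¹) - c)^2) :=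
          (Real.sqrt_sq (le_of_lt hcase)).symm
        rw [hs1, ← Real.sqrt_sq hr0]
        exact Real.sqrt_le_sqrt key
      linarith
  have hαa : α ≤ a := by
    have h6 : a⁻¹ ≤ α⁻¹ := by rw [hα]; exact hble
    have h7 := inv_anti₀ hb0 h6
    rw [inv_inv, inv_inv] at h7
    exact h7
  exact loewner_of_eig_ge hQ.1 (fun i => le_trans hαa (hi₀ i))

lemma fixed_point {Q W : Matrix n n ℝ} {t γ1 : ℝ}
    (ht : 0 < t) (hγ1 : 0 < γ1)
    (hopt : ∀ i j, (Q i j ≠ 0 → W i j = -γ1 * Real.sign (Q i j)) ∧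
      (Q i j = 0 → |W i j| ≤ γ1)) :
    Sft (Q - t • W) (t*γ1) = Q := by
  ext i j
  simp only [Sft, Matrix.of_apply, Matrix.sub_apply, Matrix.smul_apply, smul_eq_mul]
  rcases lt_trichotomy (Q i j) 0 with hq|hq|hq
  · have hW := (hopt i j).1 (ne_of_lt hq)
    rw [Real.sign_of_neg hq] at hW
    have hWv : W i j = γ1 := by rw [hW]; ring
    rw [hWv]
    have harg : Q i j - t * γ1 < 0 := by nlinarith
    rw [Real.sign_of_neg harg, abs_of_neg harg, max_eq_left (by linarith)]
    ring
  · have hW := (hopt i j).2 hq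
    rw [hq]
    have habs : |(0:ℝ) - t * W i j| - t*γ1 ≤ 0 := by
      rw [zero_sub, abs_neg, abs_mul, abs_of_pos ht]
      nlinarith [hW, abs_nonneg (W i j)]
    rw [max_eq_right habs]
    ring
  · have hW := (hopt i j).1 (ne_of_gt hq)
    rw [Real.sign_of_pos hq] at hW
    have hWv : W i j = -γ1 := by rw [hW]; ring
    rw [hWv]
    have harg : 0 < Q i j - t * (-γ1) := by nlinarith
    rw [Real.sign_of_pos harg, abs_of_pos harg, max_eq_left (by linarith)]
    ring

end Final

/-- given the lower bound αI ⪯ Ω⁽ᵏ⁾ for all k, every GEN-ISTA iterate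
  satisfies Ω⁽ᵏ⁾ ⪯ b'I with b' = ‖Ω*‖₂ + ‖Ω⁽⁰⁾ − Ω*‖_F. -/
theorem stmt13 {p : ℕ} (hp : 0 < p)
    (S : Matrix (Fin p) (Fin p) ℝ) (hS : S.IsHermitian)
    (γ1 γ2 : ℝ) (hγ1 : 0 < γ1) (hγ2 : 0 < γ2)
    (Ωstar : Matrix (Fin p) (Fin p) ℝ) (hΩstar : Ωstar.PosDef)
    (hmin : ∀ M : Matrix (Fin p) (Fin p) ℝ, M.PosDef →
      genObj S γ1 γ2 Ωstar ≤ genObj S γ1 γ2 M)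
    (α : ℝ)
    (hα : α⁻¹ = (maxEig S + γ1 * p + Real.sqrt ((maxEig S + γ1 * p)^2 + 8*γ2)) / 2)
    (t : ℝ) (ht0 : 0 < t) (ht : t ≤ α^2 / (2*γ2*α^2 + 1))
    (Ω : ℕ → Matrix (Fin p) (Fin p) ℝ) (h0 : (Ω 0).PosDef)
    (hiter : ∀ k, Ω (k+1) = Sft (Ω k - t • (S - (Ω k)⁻¹ + (2*γ2) • Ω k)) (t*γ1))
    (hlow : ∀ k, loewnerLE (α • (1 : Matrix (Fin p) (Fin p) ℝ)) (Ω k))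
    (b' : ℝ) (hb' : b' = specNorm Ωstar + frobNorm (Ω 0 - Ωstar)) :
    ∀ k, loewnerLE (Ω k) (b' • (1 : Matrix (Fin p) (Fin p) ℝ)) := by
  haveI : Nonempty (Fin p) := ⟨⟨0, hp⟩⟩
  have hαpos : 0 < α := alpha_pos' hγ2 hα
  set Q := Ωstar with hQdef
  set W : Matrix (Fin p) (Fin p) ℝ := S - Q⁻¹ + (2*γ2) • Q with hWdef
  have hopt : ∀ i j, (Q i j ≠ 0 → W i j = -γ1 * Real.sign (Q i j)) ∧
      (Q i j = 0 → |W i j| ≤ γ1) :=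
    fun i j => opt_conditions S hS γ1 γ2 hγ1 hγ2 hΩstar hmin i j
  have hWb : ∀ i j, |W i j| ≤ γ1 := by
    intro i j
    rcases eq_or_ne (Q i j) 0 with h0'|hne
    · exact (hopt i j).2 h0'
    · rw [(hopt i j).1 hne, abs_mul, abs_neg, abs_of_pos hγ1]
      rcases hne.lt_or_gt with h|h
      · rw [Real.sign_of_neg h]; simp
      · rw [Real.sign_of_pos h]; simp
  have hQpsd : (Q - α • (1 : Matrix (Fin p) (Fin p) ℝ)).PosSemidef := by
    apply qstar_loewner S hS γ1 γ2 α hγ1 hγ2 hΩstar hWb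
    rw [Fintype.card_fin]
    exact hα
  have hfix : Sft (Q - t • W) (t*γ1) = Q := fixed_point ht0 hγ1 hopt
  have hden : (0:ℝ) < 2*γ2*α^2 + 1 := by positivity
  have ht' : t * (2*γ2*α^2 + 1) ≤ α^2 := (le_div_iff₀ hden).mp ht
  have hΩH : ∀ k, (Ω k).IsHermitian := by
    intro k
    have h1 := (hlow k).1
    have h2 : (Ω k) = (Ω k - α • (1 : Matrix (Fin p) (Fin p) ℝ)) + α • 1 := by
      rw [sub_add_cancel]
    rw [h2]
    apply h1.add
    unfold Matrix.IsHermitian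
    rw [Matrix.conjTranspose_smul, Matrix.conjTranspose_one, star_trivial]
  have hΩPD : ∀ k, (Ω k).PosDef := by
    intro k
    refine Matrix.PosDef.of_dotProduct_mulVec_pos (hΩH k) ?_
    intro x hx
    rw [star_trivial_vec]
    have h1 := quad_ge_of_loewner (hlow k) x
    have h2 := dot_self_pos hx
    nlinarith
  have hstep : ∀ k, frobNorm (Ω (k+1) - Q) ≤ frobNorm (Ω k - Q) := by
    intro k
    rw [hiter k]
    conv_lhs => rw [← hfix]
    have hτ : 0 ≤ t * γ1 := le_of_lt (mul_pos ht0 hγ1)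
    apply le_trans (frobNorm_Sft_sub_Sft _ _ _ hτ)
    have hXdet : IsUnit (Ω k).det := isUnit_iff_ne_zero.mpr (ne_of_gt (hΩPD k).det_pos)
    have hYdet : IsUnit Q.det := isUnit_iff_ne_zero.mpr (ne_of_gt hΩstar.det_pos)
    have hinv : (Ω k)⁻¹ * (Ω k - Q) * Q⁻¹ = Q⁻¹ - (Ω k)⁻¹ := by
      calc (Ω k)⁻¹ * (Ω k - Q) * Q⁻¹
          = ((Ω k)⁻¹ * (Ω k) - (Ω k)⁻¹ * Q) * Q⁻¹ := by rw [Matrix.mul_sub]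
        _ = (1 - (Ω k)⁻¹ * Q) * Q⁻¹ := by rw [Matrix.nonsing_inv_mul _ hXdet]
        _ = Q⁻¹ - (Ω k)⁻¹ * (Q * Q⁻¹) := by
            rw [Matrix.sub_mul, Matrix.one_mul, Matrix.mul_assoc]
        _ = Q⁻¹ - (Ω k)⁻¹ := by rw [Matrix.mul_nonsing_inv _ hYdet, Matrix.mul_one]
    have hGdiff : (Ω k - t • (S - (Ω k)⁻¹ + (2*γ2) • Ω k)) - (Q - t • W)
        = (1 - 2*t*γ2) • (Ω k - Q) - t • ((Ω k)⁻¹ * (Ω k - Q) * Q⁻¹) := by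
      rw [hinv, hWdef]
      module
    rw [hGdiff]
    exact contraction_bound (hΩPD k) hΩstar hαpos hγ2 ht0 (hlow k) hQpsd ht' (Ω k - Q)
  have hmono : ∀ k, frobNorm (Ω k - Q) ≤ frobNorm (Ω 0 - Q) := by
    intro k
    induction k with
    | zero => exact le_refl _
    | succ m ih => exact le_trans (hstep m) ih
  intro k
  show ((b' • (1 : Matrix (Fin p) (Fin p) ℝ)) - Ω k).PosSemidef
  apply Matrix.PosSemidef.of_dotProduct_mulVec_nonneg
  · have h1 : (b' • (1 : Matrix (Fin p) (Fin p) ℝ)).IsHermitian := by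
      unfold Matrix.IsHermitian
      rw [Matrix.conjTranspose_smul, Matrix.conjTranspose_one, star_trivial]
    exact h1.sub (hΩH k)
  · intro x
    rw [star_trivial_vec]
    have hexp : x ⬝ᵥ (((b' • (1 : Matrix (Fin p) (Fin p) ℝ)) - Ω k) *ᵥ x)
        = b' * (x ⬝ᵥ x) - x ⬝ᵥ (Ω k *ᵥ x) := by
      rw [Matrix.sub_mulVec, dotProduct_sub, Matrix.smul_mulVec,
        Matrix.one_mulVec, dotProduct_smul, smul_eq_mul]
    rw [hexp]
    have hsplit : x ⬝ᵥ (Ω k *ᵥ x) = x ⬝ᵥ (Q *ᵥ x) + x ⬝ᵥ ((Ω k - Q) *ᵥ x) := by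
      rw [Matrix.sub_mulVec, dotProduct_sub]
      ring
    have h1 := quad_le_specNorm Q x
    have h2 := quad_le_frobNorm (Ω k - Q) x
    have h4 : frobNorm (Ω k - Q) * (x ⬝ᵥ x) ≤ frobNorm (Ω 0 - Q) * (x ⬝ᵥ x) :=
      mul_le_mul_of_nonneg_right (hmono k) (dot_self_nonneg x)
    rw [hb']
    linarith [hsplit]
end

section
/- Let A be a p×p real symmetric matrix with spectral decomposition A = V·diag(a_1, …, a_p)·Vᵀ (V orthogonal), and let η > 0. Then the minimizer of tr(AΘ) − log det(Θ) + η‖Θ‖_F² over symmetric positive definite p×p matrices Θ is Θ* = V·diag(d_1, …, d_p)·Vᵀ, where d_j = (−a_j + √(a_j² + 8η))/(4η) > 0 for each j; equivalently, 1/d_j = (a_j + √(a_j² + 8η))/2. -/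
open Matrix BigOperators Kronecker

section Aux

lemma posDef_conj {n : Type*} [Fintype n] [DecidableEq n] {M : Matrix n n ℝ} (hM : M.PosDef)
    (B : Matrix n n ℝ) (hB : Function.Injective B.mulVec) : (Bᵀ * M * B).PosDef := by
  refine Matrix.PosDef.of_dotProduct_mulVec_pos ?_ ?_
  · have hsym : Mᵀ = M := by simpa using hM.1.eq
    simp [Matrix.IsHermitian, conjTranspose_mul, Matrix.mul_assoc, hsym]
  · intro x hx
    have hBx : B *ᵥ x ≠ 0 := by
      intro h
      exact hx (hB (by simpa using h))
    have := hM.dotProduct_mulVec_pos hBx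
    calc (0:ℝ) < star (B *ᵥ x) ⬝ᵥ M *ᵥ (B *ᵥ x) := this
      _ = star x ⬝ᵥ (Bᵀ * M * B) *ᵥ x := by
          simp only [← mulVec_mulVec, dotProduct_mulVec, star_trivial]
          rw [vecMul_transpose]

lemma logdet_le_trace {p : ℕ} (M : Matrix (Fin p) (Fin p) ℝ) (hM : M.PosDef) :
    Real.log M.det ≤ M.trace - p := by
  have hh := hM.1
  have hev : ∀ i, 0 < hh.eigenvalues i := hM.eigenvalues_pos
  have hdet : M.det = ∏ i, hh.eigenvalues i := by
    simpa using hh.det_eq_prod_eigenvalues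
  have htr : M.trace = ∑ i, hh.eigenvalues i := by
    simpa using hh.trace_eq_sum_eigenvalues
  rw [hdet, htr, Real.log_prod (fun i _ => (hev i).ne')]
  have : ∀ i ∈ Finset.univ, Real.log (hh.eigenvalues i) ≤ hh.eigenvalues i - 1 :=
    fun i _ => Real.log_le_sub_one_of_pos (hev i)
  calc ∑ i, Real.log (hh.eigenvalues i) ≤ ∑ i : Fin p, (hh.eigenvalues i - 1) :=
        Finset.sum_le_sum this
    _ = (∑ i, hh.eigenvalues i) - p := by
        rw [Finset.sum_sub_distrib]; simp

lemma key_diag {p : ℕ} (η : ℝ) (hη : 0 < η) (a d : Fin p → ℝ) (hd0 : ∀ j, 0 < d j)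
    (hrel : ∀ j, (d j)⁻¹ = a j + 2*η*d j)
    (X : Matrix (Fin p) (Fin p) ℝ) (hX : X.PosDef) :
    (∑ j, a j * d j) - (∑ j, Real.log (d j)) + η * ∑ j, (d j)^2 ≤
      (Matrix.diagonal a * X).trace - Real.log X.det + η * ∑ i, ∑ j, (X i j)^2 := by
  set s : Fin p → ℝ := fun j => Real.sqrt (d j)⁻¹ with hs
  have hs2 : ∀ j, s j ^ 2 = (d j)⁻¹ := fun j => Real.sq_sqrt (inv_nonneg.mpr (hd0 j).le)
  have hsne : ∀ j, s j ≠ 0 := fun j => by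
    exact (Real.sqrt_pos.mpr (inv_pos.mpr (hd0 j))).ne'
  set D : Matrix (Fin p) (Fin p) ℝ := Matrix.diagonal s with hD
  have hDinj : Function.Injective D.mulVec := by
    intro x y h
    funext i
    have := congrFun h i
    simp only [hD, mulVec_diagonal] at this
    exact mul_left_cancel₀ (hsne i) this
  have hMpd : (Dᵀ * X * D).PosDef := posDef_conj hX D hDinj
  have hbound := logdet_le_trace _ hMpd
  have hDt : Dᵀ = D := by simp [hD]
  have hdetX : 0 < X.det := hX.det_pos
  have hdetD : D.det = ∏ j, s j := by simp [hD]
  have hdetM : (Dᵀ * X * D).det = (∏ j, (d j)⁻¹) * X.det := by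
    rw [hDt, Matrix.det_mul, Matrix.det_mul, hdetD]
    rw [show (∏ j, s j) * X.det * (∏ j, s j) = (∏ j, s j * s j) * X.det by
      rw [Finset.prod_mul_distrib]; ring]
    congr 1
    exact Finset.prod_congr rfl fun j _ => by rw [← hs2 j]; ring
  have htrM : (Dᵀ * X * D).trace = ∑ j, (d j)⁻¹ * X j j := by
    rw [hDt]
    have happ : ∀ i j, (D * X * D) i j = s i * X i j * s j := by
      intro i j
      simp [hD, Matrix.mul_diagonal, Matrix.diagonal_mul]
    simp only [Matrix.trace, Matrix.diag_apply, happ]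
    exact Finset.sum_congr rfl fun j _ => by rw [← hs2 j]; ring
  have hlog : Real.log X.det ≤ (∑ j, (d j)⁻¹ * X j j) - p + ∑ j, Real.log (d j) := by
    have h1 : Real.log ((∏ j, (d j)⁻¹) * X.det)
        = (∑ j, Real.log (d j)⁻¹) + Real.log X.det := by
      rw [Real.log_mul (Finset.prod_pos fun j _ => inv_pos.mpr (hd0 j)).ne' hdetX.ne',
        Real.log_prod]
      exact fun j _ => (inv_pos.mpr (hd0 j)).ne'
    have h2 : ∀ j, Real.log (d j)⁻¹ = - Real.log (d j) := fun j => Real.log_inv _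
    rw [hdetM, htrM, h1] at hbound
    simp only [h2, Finset.sum_neg_distrib] at hbound
    linarith
  have htr : (Matrix.diagonal a * X).trace = ∑ j, a j * X j j := by
    simp only [Matrix.trace, Matrix.diag_apply, Matrix.diagonal_mul]
  have hdiag_le : ∑ j, (X j j)^2 ≤ ∑ i, ∑ j, (X i j)^2 := by
    apply Finset.sum_le_sum
    intro i _
    exact Finset.single_le_sum (f := fun j => (X i j)^2) (fun j _ => sq_nonneg _)
      (Finset.mem_univ i)
  have hsq : (0:ℝ) ≤ ∑ j, (X j j - d j)^2 := Finset.sum_nonneg fun j _ => sq_nonneg _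
  have hexpand : ∑ j, (X j j - d j)^2
      = ∑ j, (X j j)^2 - 2 * ∑ j, d j * X j j + ∑ j, (d j)^2 := by
    calc ∑ j, (X j j - d j)^2
        = ∑ j, ((X j j)^2 - 2*(d j * X j j) + (d j)^2) :=
          Finset.sum_congr rfl fun j _ => by ring
      _ = _ := by rw [Finset.sum_add_distrib, Finset.sum_sub_distrib, ← Finset.mul_sum]
  have hp : (p:ℝ) = (∑ j, a j * d j) + 2*η*∑ j, (d j)^2 := by
    have : ∀ j, (1:ℝ) = a j * d j + 2*η*(d j)^2 := fun j => by
      have h := hrel j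
      have hdj : d j ≠ 0 := (hd0 j).ne'
      field_simp at h
      linear_combination h
    calc (p:ℝ) = ∑ _j : Fin p, (1:ℝ) := by simp
      _ = ∑ j, (a j * d j + 2*η*(d j)^2) := Finset.sum_congr rfl fun j _ => this j
      _ = _ := by rw [Finset.sum_add_distrib, Finset.mul_sum]
  have hsub : ∑ j, (d j)⁻¹ * X j j = (∑ j, a j * X j j) + 2*η*∑ j, d j * X j j := by
    rw [Finset.mul_sum, ← Finset.sum_add_distrib]
    exact Finset.sum_congr rfl fun j _ => by rw [hrel j]; ring
  rw [htr]
  nlinarith [mul_le_mul_of_nonneg_left hdiag_le hη.le, mul_nonneg hη.le hsq]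

lemma trace_conj {p : ℕ} (U W M : Matrix (Fin p) (Fin p) ℝ) (h : W * U = 1) :
    (U * M * W).trace = M.trace := by
  rw [Matrix.trace_mul_cycle, h, Matrix.one_mul]

lemma matConjMul {p : ℕ} (U W M N : Matrix (Fin p) (Fin p) ℝ) (h : W * U = 1) :
    (U * M * W) * (U * N * W) = U * (M * N) * W := by
  simp only [Matrix.mul_assoc]
  rw [← Matrix.mul_assoc W U, h, Matrix.one_mul]

lemma frob_sq {p : ℕ} (M : Matrix (Fin p) (Fin p) ℝ) :
    (frobNorm M)^2 = ∑ i, ∑ j, (M i j)^2 := by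
  rw [frobNorm]
  exact Real.sq_sqrt (Finset.sum_nonneg fun i _ => Finset.sum_nonneg fun j _ => sq_nonneg _)

lemma sumsq_eq_trace {p : ℕ} (M : Matrix (Fin p) (Fin p) ℝ) :
    ∑ i, ∑ j, (M i j)^2 = (Mᵀ * M).trace := by
  simp only [Matrix.trace, Matrix.diag_apply, Matrix.mul_apply, Matrix.transpose_apply]
  rw [Finset.sum_comm]
  exact Finset.sum_congr rfl fun i _ => Finset.sum_congr rfl fun j _ => (sq (M j i)).symm ▸ by ring

end Aux

/-- closed form of the ridge-penalized Gaussian likelihood precision matrix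
  estimator: the minimizer of tr(AΘ) − log det Θ + η‖Θ‖_F² is V·diag(d)·Vᵀ with
  d_j = (−a_j + √(a_j² + 8η))/(4η) > 0 and 1/d_j = (a_j + √(a_j² + 8η))/2. -/
theorem stmt15 {p : ℕ} (hp : 0 < p)
    (A V : Matrix (Fin p) (Fin p) ℝ) (a : Fin p → ℝ)
    (hV : Vᵀ * V = 1)
    (hA : A = V * Matrix.diagonal a * Vᵀ)
    (η : ℝ) (hη : 0 < η)
    (d : Fin p → ℝ)
    (hd : ∀ j, d j = (-(a j) + Real.sqrt ((a j)^2 + 8*η)) / (4*η)) :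
    (∀ j, 0 < d j) ∧
    (∀ j, (d j)⁻¹ = (a j + Real.sqrt ((a j)^2 + 8*η)) / 2) ∧
    (V * Matrix.diagonal d * Vᵀ).PosDef ∧
    (∀ Θ : Matrix (Fin p) (Fin p) ℝ, Θ.PosDef →
      (A * (V * Matrix.diagonal d * Vᵀ)).trace
          - Real.log (V * Matrix.diagonal d * Vᵀ).det
          + η * (frobNorm (V * Matrix.diagonal d * Vᵀ))^2 ≤
        (A * Θ).trace - Real.log Θ.det + η * (frobNorm Θ)^2) := by
  have hVV : V * Vᵀ = 1 := mul_eq_one_comm.mp hV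
  have hsq : ∀ j, Real.sqrt ((a j)^2 + 8*η) ^ 2 = (a j)^2 + 8*η :=
    fun j => Real.sq_sqrt (by positivity)
  have hsnn : ∀ j, 0 ≤ Real.sqrt ((a j)^2 + 8*η) := fun j => Real.sqrt_nonneg _
  have hpos : ∀ j, 0 < d j := by
    intro j
    rw [hd j]
    apply div_pos _ (by positivity)
    nlinarith [hsq j, hsnn j]
  have hinv : ∀ j, (d j)⁻¹ = (a j + Real.sqrt ((a j)^2 + 8*η)) / 2 := by
    intro j
    apply inv_eq_of_mul_eq_one_right
    rw [hd j]
    field_simp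
    linear_combination hsq j
  have hrel : ∀ j, (d j)⁻¹ = a j + 2*η*d j := by
    intro j
    rw [hinv j, hd j]
    field_simp
    ring
  have hVinj : Function.Injective V.mulVec := by
    intro x y h
    have h2 := congrArg (Vᵀ.mulVec) h
    simpa [Matrix.mulVec_mulVec, hV] using h2
  have hVtinj : Function.Injective (Vᵀ).mulVec := by
    intro x y h
    have h2 := congrArg (V.mulVec) h
    simpa [Matrix.mulVec_mulVec, hVV] using h2
  have hdiagpd : (Matrix.diagonal d).PosDef := Matrix.PosDef.diagonal hpos
  have hstarpd : (V * Matrix.diagonal d * Vᵀ).PosDef := by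
    have := posDef_conj hdiagpd Vᵀ hVtinj
    rwa [Matrix.transpose_transpose] at this
  refine ⟨hpos, hinv, hstarpd, ?_⟩
  intro Θ hΘ
  set X : Matrix (Fin p) (Fin p) ℝ := Vᵀ * Θ * V with hX
  have hXpd : X.PosDef := posDef_conj hΘ V hVinj
  have hdV : Vᵀ.det * V.det = 1 := by rw [← Matrix.det_mul, hV, Matrix.det_one]
  -- equalities for Θ* side
  have e1 : (A * (V * Matrix.diagonal d * Vᵀ)).trace = ∑ j, a j * d j := by
    rw [hA, matConjMul V Vᵀ _ _ hV, trace_conj V Vᵀ _ hV, Matrix.diagonal_mul_diagonal,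
      Matrix.trace_diagonal]
  have e2 : (V * Matrix.diagonal d * Vᵀ).det = ∏ j, d j := by
    rw [Matrix.det_mul, Matrix.det_mul, Matrix.det_diagonal]
    linear_combination (∏ j, d j) * hdV
  have e2' : Real.log (V * Matrix.diagonal d * Vᵀ).det = ∑ j, Real.log (d j) := by
    rw [e2, Real.log_prod (fun j _ => (hpos j).ne')]
  have e4 : (frobNorm (V * Matrix.diagonal d * Vᵀ))^2 = ∑ j, (d j)^2 := by
    rw [frob_sq, sumsq_eq_trace]
    have hT : (V * Matrix.diagonal d * Vᵀ)ᵀ = V * Matrix.diagonal d * Vᵀ := by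
      simp [Matrix.transpose_mul, Matrix.mul_assoc]
    rw [hT, matConjMul V Vᵀ _ _ hV, trace_conj V Vᵀ _ hV, Matrix.diagonal_mul_diagonal,
      Matrix.trace_diagonal]
    exact Finset.sum_congr rfl fun j _ => (sq (d j)).symm ▸ by ring
  -- equalities for Θ side
  have e5 : (Matrix.diagonal a * X).trace = (A * Θ).trace := by
    rw [hA, hX]
    have h1 : Matrix.diagonal a * (Vᵀ * Θ * V) = (Matrix.diagonal a * Vᵀ) * Θ * V := by
      simp [Matrix.mul_assoc]
    rw [h1, Matrix.trace_mul_cycle, ← Matrix.mul_assoc]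
  have e6 : X.det = Θ.det := by
    rw [hX, Matrix.det_mul, Matrix.det_mul]
    linear_combination Θ.det * hdV
  have e7 : ∑ i, ∑ j, (X i j)^2 = (frobNorm Θ)^2 := by
    rw [sumsq_eq_trace, frob_sq, sumsq_eq_trace]
    have hXt : Xᵀ = Vᵀ * Θᵀ * V := by
      rw [hX]; simp [Matrix.transpose_mul, Matrix.mul_assoc]
    rw [hXt, hX, matConjMul Vᵀ V _ _ hVV, trace_conj Vᵀ V _ hVV]
  have hkey := key_diag η hη a d hpos hrel X hXpd
  calc (A * (V * Matrix.diagonal d * Vᵀ)).trace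
        - Real.log (V * Matrix.diagonal d * Vᵀ).det
        + η * (frobNorm (V * Matrix.diagonal d * Vᵀ))^2
      = (∑ j, a j * d j) - (∑ j, Real.log (d j)) + η * ∑ j, (d j)^2 := by
        rw [e1, e2', e4]
    _ ≤ (Matrix.diagonal a * X).trace - Real.log X.det + η * ∑ i, ∑ j, (X i j)^2 := hkey
    _ = (A * Θ).trace - Real.log Θ.det + η * (frobNorm Θ)^2 := by
        rw [e5, e6, e7]
end
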